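/- Let p : (0,1) → ℝ be a nonnegative integrable function that is symmetric (p(x) = p(1-x) for all x ∈ (0,1)) and non-decreasing on (0, 1/2). Then for every concave, positive, integrable function φ : (0,1) → ℝ one has ∫₀¹ p(x)φ(x) dx ≤ (∫₀¹ φ(x) dx) · (∫₀¹ 4·min{x, 1-x}·p(x) dx). -/

import Mathlib

open MeasureTheory Set ENNReal

private lemma clausing_split (f : ℝ → ℝ) {a b c : ℝ} (hab : a ≤ b) (hbc : b ≤ c)
    (hf : IntegrableOn f (Ioo a c)) :
    ∫ x in Ioo a c, f x = (∫ x in Ioo a b, f x) + ∫ x in Ioo b c, f x := by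
  have h1 : IntervalIntegrable f volume a b :=
    (intervalIntegrable_iff_integrableOn_Ioo_of_le hab).mpr
      (hf.mono_set (Ioo_subset_Ioo le_rfl hbc))
  have h2 : IntervalIntegrable f volume b c :=
    (intervalIntegrable_iff_integrableOn_Ioo_of_le hbc).mpr
      (hf.mono_set (Ioo_subset_Ioo hab le_rfl))
  rw [← integral_Ioc_eq_integral_Ioo, ← integral_Ioc_eq_integral_Ioo,
    ← integral_Ioc_eq_integral_Ioo, ← intervalIntegral.integral_of_le hab,
    ← intervalIntegral.integral_of_le hbc,
    ← intervalIntegral.integral_of_le (hab.trans hbc)]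
  exact (intervalIntegral.integral_add_adjacent_intervals h1 h2).symm

private lemma clausing_reflect (f : ℝ → ℝ) {a b : ℝ} (hab : a ≤ b) :
    ∫ x in Ioo a b, f (1 - x) = ∫ x in Ioo (1 - b) (1 - a), f x := by
  rw [← integral_Ioc_eq_integral_Ioo, ← integral_Ioc_eq_integral_Ioo,
    ← intervalIntegral.integral_of_le hab,
    ← intervalIntegral.integral_of_le (by linarith : (1:ℝ) - b ≤ 1 - a)]
  exact intervalIntegral.integral_comp_sub_left f 1

private lemma clausing_reflect_int (f : ℝ → ℝ) {a b : ℝ} (hab : a ≤ b)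
    (hf : IntegrableOn f (Ioo a b)) :
    IntegrableOn (fun x => f (1 - x)) (Ioo (1 - b) (1 - a)) := by
  have := (((intervalIntegrable_iff_integrableOn_Ioo_of_le hab).mpr hf).comp_sub_left 1).symm
  exact (intervalIntegrable_iff_integrableOn_Ioo_of_le (by linarith : (1:ℝ) - b ≤ 1 - a)).mp this

/-- slope lemma: concave positive on (0,1) gives `a * φ b ≤ b * φ a` for `a ≤ b`. -/
private lemma clausing_slope (φ : ℝ → ℝ) (hconc : ConcaveOn ℝ (Ioo 0 1) φ)
    (hpos : ∀ x ∈ Ioo (0:ℝ) 1, 0 < φ x) {a b : ℝ} (ha : a ∈ Ioo (0:ℝ) 1)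
    (hb : b ∈ Ioo (0:ℝ) 1) (hab : a ≤ b) : a * φ b ≤ b * φ a := by
  rcases eq_or_lt_of_le hab with rfl | hab
  · rw [mul_comm]
  have h0a : 0 < a := ha.1
  have key : ∀ ε ∈ Ioo (0:ℝ) a, ((a - ε) / (b - ε)) * φ b ≤ φ a := by
    intro ε hε
    have hεI : ε ∈ Ioo (0:ℝ) 1 := ⟨hε.1, lt_trans (lt_trans hε.2 hab) hb.2⟩
    set lam := (a - ε) / (b - ε) with hlam
    have hbe : 0 < b - ε := by linarith [hε.2]
    have hlam0 : 0 ≤ lam := div_nonneg (by linarith [hε.2]) hbe.le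
    have hlam1 : lam ≤ 1 := by
      rw [div_le_one hbe]; linarith
    have hcomb : lam * b + (1 - lam) * ε = a := by
      have hl : lam * (b - ε) = a - ε := by rw [hlam]; exact div_mul_cancel₀ _ hbe.ne'
      linear_combination hl
    have := hconc.2 hb hεI hlam0 (by linarith : (0:ℝ) ≤ 1 - lam) (by ring)
    simp only [smul_eq_mul] at this
    rw [hcomb] at this
    have : lam * φ b + (1 - lam) * φ ε ≤ φ a := this
    nlinarith [hpos ε hεI]
  have htend : Filter.Tendsto (fun ε => ((a - ε) / (b - ε)) * φ b) (nhdsWithin 0 (Ioo 0 a))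
      (nhds ((a / b) * φ b)) := by
    apply Filter.Tendsto.mono_left _ nhdsWithin_le_nhds
    have hb0 : b ≠ 0 := ne_of_gt hb.1
    have : ContinuousAt (fun ε : ℝ => ((a - ε) / (b - ε)) * φ b) 0 := by
      apply ContinuousAt.mul _ continuousAt_const
      exact ContinuousAt.div (by fun_prop) (by fun_prop) (by simpa using hb0)
    simpa using this.tendsto
  have hne : (nhdsWithin (0:ℝ) (Ioo 0 a)).NeBot := left_nhdsWithin_Ioo_neBot h0a
  have hfin : (a / b) * φ b ≤ φ a := by
    refine le_of_tendsto htend ?_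
    exact Filter.eventually_of_mem self_mem_nhdsWithin key
  have hbpos : 0 < b := lt_trans h0a hab
  calc a * φ b = b * ((a / b) * φ b) := by field_simp
  _ ≤ b * φ a := by nlinarith

private lemma clausing_linear_int {a b c : ℝ} (hab : a ≤ b) :
    ∫ x in Ioo a b, x * c = (b^2 - a^2)/2 * c := by
  rw [← integral_Ioc_eq_integral_Ioo, ← intervalIntegral.integral_of_le hab,
    intervalIntegral.integral_mul_const, integral_id]

private lemma clausing_star (φ : ℝ → ℝ)
    (hpos : ∀ x ∈ Ioo (0:ℝ) 1, 0 < φ x)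
    (hint : IntegrableOn φ (Ioo 0 1))
    (hsymm : ∀ x ∈ Ioo (0:ℝ) 1, φ x = φ (1 - x))
    (hslope : ∀ a b : ℝ, a ∈ Ioo (0:ℝ) 1 → b ∈ Ioo (0:ℝ) 1 → a ≤ b → a * φ b ≤ b * φ a)
    {t : ℝ} (ht : t ∈ Ioc (0:ℝ) (1/2)) :
    2*t^2 * ∫ x in Ioo (0:ℝ) 1, φ x ≤ ∫ x in Ioo (0:ℝ) t, φ x := by
  have ht0 : 0 < t := ht.1
  have ht2 : t ≤ 1/2 := ht.2
  have htI : t ∈ Ioo (0:ℝ) 1 := ⟨ht0, by linarith⟩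
  have hsub1 : Ioo (0:ℝ) t ⊆ Ioo (0:ℝ) 1 := Ioo_subset_Ioo le_rfl (by linarith)
  have hsub2 : Ioo t (1/2:ℝ) ⊆ Ioo (0:ℝ) 1 := Ioo_subset_Ioo ht0.le (by linarith)
  have hsubh : Ioo (0:ℝ) (1/2) ⊆ Ioo (0:ℝ) 1 := Ioo_subset_Ioo le_rfl (by norm_num)
  set A := ∫ x in Ioo (0:ℝ) t, φ x with hA
  set B := ∫ x in Ioo t (1/2:ℝ), φ x with hB
  set c := φ t with hc
  have hc0 : 0 ≤ c := (hpos t htI).le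
  -- half symmetry
  have hhalf : ∫ x in Ioo (0:ℝ) 1, φ x = 2 * ∫ x in Ioo (0:ℝ) (1/2), φ x := by
    have hs : ∫ x in Ioo (1/2:ℝ) 1, φ x = ∫ x in Ioo (0:ℝ) (1/2), φ x := by
      have : ∫ x in Ioo (1/2:ℝ) 1, φ x = ∫ x in Ioo (1/2:ℝ) 1, φ (1 - x) := by
        refine setIntegral_congr_fun measurableSet_Ioo fun x hx => ?_
        exact hsymm x ⟨by linarith [hx.1], hx.2⟩
      rw [this, clausing_reflect φ (by norm_num : (1/2:ℝ) ≤ 1)]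
      norm_num
    rw [clausing_split φ (by norm_num : (0:ℝ) ≤ 1/2) (by norm_num : (1/2:ℝ) ≤ 1) hint, hs]
    ring
  have hsplit : ∫ x in Ioo (0:ℝ) (1/2), φ x = A + B :=
    clausing_split φ ht0.le ht2 (hint.mono_set hsubh)
  -- A lower bound:  (t^2/2) * c ≤ t * A
  have hA1 : (t^2 - 0^2)/2 * c ≤ t * A := by
    rw [hA, ← integral_const_mul, ← clausing_linear_int (le_of_lt ht0)]
    refine setIntegral_mono_on ?_ ?_ measurableSet_Ioo fun x hx => ?_
    · exact (intervalIntegrable_iff_integrableOn_Ioo_of_le ht0.le).mp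
        ((continuous_id.mul continuous_const).intervalIntegrable 0 t)
    · exact (hint.mono_set hsub1).const_mul t
    · exact hslope x t (hsub1 hx) htI hx.2.le
  -- B upper bound: t * B ≤ ((1/2)^2 - t^2)/2 * c
  have hB1 : t * B ≤ ((1/2)^2 - t^2)/2 * c := by
    rw [hB, ← integral_const_mul, ← clausing_linear_int ht2]
    refine setIntegral_mono_on ?_ ?_ measurableSet_Ioo fun x hx => ?_
    · exact (hint.mono_set hsub2).const_mul t
    · exact (intervalIntegrable_iff_integrableOn_Ioo_of_le ht2).mp
        ((continuous_id.mul continuous_const).intervalIntegrable t (1/2))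
    · exact hslope t x htI (hsub2 hx) hx.1.le
  rw [hhalf, hsplit]
  have hA0 : (0:ℝ) ≤ A := by
    rw [hA]; exact setIntegral_nonneg measurableSet_Ioo fun x hx => (hpos x (hsub1 hx)).le
  have h1 : t * (t*c/2) ≤ t * A := by nlinarith [hA1]
  have h2 : t*c/2 ≤ A := le_of_mul_le_mul_left h1 ht0
  nlinarith [mul_le_mul_of_nonneg_left hB1 (by positivity : (0:ℝ) ≤ 4*t),
    mul_le_mul_of_nonneg_left h2 (by nlinarith : (0:ℝ) ≤ 1 - 4*t^2)]

private lemma clausing_core (p h : ℝ → ℝ)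
    (hp_nonneg : ∀ x ∈ Ioo (0:ℝ) (1/2), 0 ≤ p x)
    (hp_mono : MonotoneOn p (Ioo 0 (1/2)))
    (hp_meas : AEMeasurable p (volume.restrict (Ioo (0:ℝ) (1/2))))
    (hh_int : IntegrableOn h (Ioo (0:ℝ) (1/2)))
    (hph_int : IntegrableOn (fun x => p x * h x) (Ioo (0:ℝ) (1/2)))
    (hH : ∀ t ∈ Ico (0:ℝ) (1/2), 0 ≤ ∫ x in Ioo t (1/2), h x) :
    0 ≤ ∫ x in Ioo (0:ℝ) (1/2), p x * h x := by
  set μ := volume.restrict (Ioo (0:ℝ) (1/2)) with hμ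
  have hμvol : μ ≪ volume := Measure.absolutelyContinuous_of_le Measure.restrict_le_self
  set p' : ℝ → ℝ := hp_meas.mk p with hp'def
  have hp'm : Measurable p' := hp_meas.measurable_mk
  have hpp' : p =ᵐ[μ] p' := hp_meas.ae_eq_mk
  have hh_meas : AEMeasurable h μ := hh_int.aemeasurable
  set h' : ℝ → ℝ := hh_meas.mk h with hh'def
  have hh'm : Measurable h' := hh_meas.measurable_mk
  have hhh' : h =ᵐ[μ] h' := hh_meas.ae_eq_mk
  have hh'_int : Integrable h' μ := hh_int.congr hhh'
  -- the level sets
  set A : ℝ → Set ℝ := fun s => {x | x ∈ Ioo (0:ℝ) (1/2) ∧ s < p x} with hA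
  set t : ℝ → ℝ := fun s => sInf (A s ∪ {1/2}) with ht
  have hbdd : ∀ s, BddBelow (A s ∪ {1/2}) := by
    intro s
    refine ⟨0, fun x hx => ?_⟩
    rcases hx with hx | hx
    · exact hx.1.1.le
    · simp only [mem_singleton_iff] at hx; rw [hx]; norm_num
  have hne : ∀ s, (A s ∪ {1/2}).Nonempty := fun s => ⟨1/2, Or.inr rfl⟩
  have ht0 : ∀ s, 0 ≤ t s := by
    intro s
    refine le_csInf (hne s) fun x hx => ?_
    rcases hx with hx | hx
    · exact hx.1.1.le
    · simp only [mem_singleton_iff] at hx; rw [hx]; norm_num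
  have ht2 : ∀ s, t s ≤ 1/2 := fun s => csInf_le (hbdd s) (Or.inr rfl)
  have hsub1 : ∀ s, Ioo (t s) (1/2) ⊆ A s := by
    intro s y hy
    obtain ⟨x, hx, hxy⟩ := exists_lt_of_csInf_lt (hne s) hy.1
    rcases hx with hx | hx
    · have hyI : y ∈ Ioo (0:ℝ) (1/2) := ⟨lt_trans hx.1.1 hxy, hy.2⟩
      exact ⟨hyI, lt_of_lt_of_le hx.2 (hp_mono hx.1 hyI hxy.le)⟩
    · simp only [mem_singleton_iff] at hx
      exact absurd (hx ▸ hxy) (not_lt.mpr hy.2.le)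
  have hsub2 : ∀ s, A s ⊆ Ico (t s) (1/2) := by
    intro s x hx
    exact ⟨csInf_le (hbdd s) (Or.inl hx), hx.1.2⟩
  have hIoo_sub : ∀ s, Ioo (t s) (1/2) ⊆ Ioo (0:ℝ) (1/2) := fun s =>
    Ioo_subset_Ioo (ht0 s) le_rfl
  -- key layer-cake identity
  have key : ∀ G : ℝ → ℝ≥0∞, Measurable G →
      ∫⁻ x, ENNReal.ofReal (p' x) * G x ∂μ
        = ∫⁻ s in Ioi (0:ℝ), ∫⁻ x in Ioo (t s) (1/2), G x := by
    intro G hG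
    set ν := μ.withDensity G with hν
    have hacν : ν ≪ μ := withDensity_absolutelyContinuous μ G
    have step1 : ∫⁻ x, ENNReal.ofReal (p' x) * G x ∂μ = ∫⁻ x, ENNReal.ofReal (p' x) ∂ν := by
      rw [hν, lintegral_withDensity_eq_lintegral_mul μ hG (hp'm.ennreal_ofReal)]
      exact lintegral_congr fun x => (mul_comm _ _)
    have hmemν : ∀ᵐ x ∂ν, x ∈ Ioo (0:ℝ) (1/2) :=
      ((Measure.ae_le_iff_absolutelyContinuous.mpr hacν))
        (ae_restrict_mem measurableSet_Ioo)
    have hpp'ν : ∀ᵐ x ∂ν, p x = p' x :=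
      ((Measure.ae_le_iff_absolutelyContinuous.mpr hacν)) hpp'
    have step2 : ∫⁻ x, ENNReal.ofReal (p' x) ∂ν = ∫⁻ s in Ioi (0:ℝ), ν {a | s < p' a} := by
      refine lintegral_eq_lintegral_meas_lt ν ?_ hp'm.aemeasurable
      filter_upwards [hmemν, hpp'ν] with x hx hpx
      rw [← hpx]; exact hp_nonneg x hx
    have step3 : ∀ s : ℝ, ν {a | s < p' a} = ∫⁻ x in Ioo (t s) (1/2), G x := by
      intro s
      have hsing : ∀ᵐ x ∂ν, x ≠ t s := by
        rw [Filter.eventually_iff, mem_ae_iff]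
        have : {x : ℝ | x ≠ t s}ᶜ = {t s} := by ext x; simp [not_not]
        rw [this]
        exact hacν (hμvol (measure_singleton _))
      have heq : {a | s < p' a} =ᵐ[ν] Ioo (t s) (1/2) := by
        rw [Filter.eventuallyEq_set]
        filter_upwards [hmemν, hpp'ν, hsing] with x hx hpx hxs
        constructor
        · intro hsp
          have hxA : x ∈ A s := ⟨hx, hpx ▸ hsp⟩
          have := hsub2 s hxA
          exact ⟨lt_of_le_of_ne this.1 (Ne.symm hxs), this.2⟩
        · intro hxI
          have := (hsub1 s hxI).2
          rw [hpx] at this; exact this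
      rw [measure_congr heq, hν, withDensity_apply G measurableSet_Ioo, hμ,
        Measure.restrict_restrict measurableSet_Ioo,
        inter_eq_left.mpr (hIoo_sub s)]
    rw [step1, step2]
    exact setLIntegral_congr_fun measurableSet_Ioi
      (fun s _ => step3 s)
  -- apply to positive and negative parts of h'
  have keyP := key (fun x => ENNReal.ofReal (h' x)) hh'm.ennreal_ofReal
  have keyN := key (fun x => ENNReal.ofReal (-h' x)) hh'm.neg.ennreal_ofReal
  -- pointwise comparison over s
  have hcomp : ∀ s : ℝ, ∫⁻ x in Ioo (t s) (1/2), ENNReal.ofReal (-h' x)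
      ≤ ∫⁻ x in Ioo (t s) (1/2), ENNReal.ofReal (h' x) := by
    intro s
    rcases eq_or_lt_of_le (ht2 s) with hts | hts
    · rw [hts, Ioo_self]; simp
    have hint_sub : Integrable h' (volume.restrict (Ioo (t s) (1/2))) := by
      rw [← inter_eq_left.mpr (hIoo_sub s), ← Measure.restrict_restrict measurableSet_Ioo]
      exact hh'_int.restrict
    have hpos : 0 ≤ ∫ x in Ioo (t s) (1/2), h' x := by
      have he : ∫ x in Ioo (t s) (1/2), h' x = ∫ x in Ioo (t s) (1/2), h x := by
        refine integral_congr_ae ?_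
        exact ae_restrict_of_ae_restrict_of_subset (hIoo_sub s) hhh'.symm
      rw [he]
      exact hH (t s) ⟨ht0 s, hts⟩
    rw [integral_eq_lintegral_pos_part_sub_lintegral_neg_part hint_sub] at hpos
    have hfinP : (∫⁻ x in Ioo (t s) (1/2), ENNReal.ofReal (h' x)) ≠ ⊤ := by
      refine ne_of_lt (lt_of_le_of_lt (lintegral_mono fun x => ?_) hint_sub.2)
      rw [← ofReal_norm_eq_enorm]
      exact ENNReal.ofReal_le_ofReal (le_abs_self _)
    have hfinN : (∫⁻ x in Ioo (t s) (1/2), ENNReal.ofReal (-h' x)) ≠ ⊤ := by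
      refine ne_of_lt (lt_of_le_of_lt (lintegral_mono fun x => ?_) hint_sub.2)
      rw [← ofReal_norm_eq_enorm]
      exact ENNReal.ofReal_le_ofReal (neg_le_abs _)
    exact (ENNReal.toReal_le_toReal hfinN hfinP).mp (by linarith)
  -- assemble
  have hp'h'_int : Integrable (fun x => p' x * h' x) μ := by
    refine hph_int.congr ?_
    filter_upwards [hpp', hhh'] with x h1 h2
    rw [h1, h2]
  have hI : ∫ x in Ioo (0:ℝ) (1/2), p x * h x = ∫ x, p' x * h' x ∂μ := by
    refine integral_congr_ae ?_
    filter_upwards [hpp', hhh'] with x h1 h2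
    rw [h1, h2]
  rw [hI, integral_eq_lintegral_pos_part_sub_lintegral_neg_part hp'h'_int]
  have hp'nn : ∀ᵐ x ∂μ, 0 ≤ p' x := by
    filter_upwards [hpp', ae_restrict_mem measurableSet_Ioo] with x h1 h2
    rw [← h1]; exact hp_nonneg x h2
  have heqP : ∫⁻ x, ENNReal.ofReal (p' x * h' x) ∂μ
      = ∫⁻ x, ENNReal.ofReal (p' x) * ENNReal.ofReal (h' x) ∂μ := by
    refine lintegral_congr_ae ?_
    filter_upwards [hp'nn] with x hx
    exact ENNReal.ofReal_mul hx
  have heqN : ∫⁻ x, ENNReal.ofReal (-(p' x * h' x)) ∂μ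
      = ∫⁻ x, ENNReal.ofReal (p' x) * ENNReal.ofReal (-h' x) ∂μ := by
    refine lintegral_congr_ae ?_
    filter_upwards [hp'nn] with x hx
    rw [← ENNReal.ofReal_mul hx, mul_neg]
  have hle : ∫⁻ x, ENNReal.ofReal (-(p' x * h' x)) ∂μ ≤ ∫⁻ x, ENNReal.ofReal (p' x * h' x) ∂μ := by
    rw [heqP, heqN, keyP, keyN]
    exact lintegral_mono' le_rfl fun s => hcomp s
  have hfinP : (∫⁻ x, ENNReal.ofReal (p' x * h' x) ∂μ) ≠ ⊤ := by
    refine ne_of_lt (lt_of_le_of_lt (lintegral_mono fun x => ?_) hp'h'_int.2)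
    rw [← ofReal_norm_eq_enorm]
    exact ENNReal.ofReal_le_ofReal (le_abs_self _)
  have := ENNReal.toReal_mono hfinP hle
  linarith

private lemma clausing_half (φ : ℝ → ℝ) (hint : IntegrableOn φ (Ioo 0 1))
    (hsymm : ∀ x ∈ Ioo (0:ℝ) 1, φ x = φ (1 - x)) :
    ∫ x in Ioo (0:ℝ) 1, φ x = 2 * ∫ x in Ioo (0:ℝ) (1/2), φ x := by
  have hs : ∫ x in Ioo (1/2:ℝ) 1, φ x = ∫ x in Ioo (0:ℝ) (1/2), φ x := by
    have h1 : ∫ x in Ioo (1/2:ℝ) 1, φ x = ∫ x in Ioo (1/2:ℝ) 1, φ (1 - x) := by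
      refine setIntegral_congr_fun measurableSet_Ioo fun x hx => ?_
      exact hsymm x ⟨by linarith [hx.1], hx.2⟩
    rw [h1, clausing_reflect φ (by norm_num : (1/2:ℝ) ≤ 1)]
    norm_num
  rw [clausing_split φ (by norm_num : (0:ℝ) ≤ 1/2) (by norm_num : (1/2:ℝ) ≤ 1) hint, hs]
  ring

private lemma clausing_qint : IntegrableOn (fun x : ℝ => 4 * min x (1 - x)) (Ioo 0 1) := by
  refine (intervalIntegrable_iff_integrableOn_Ioo_of_le zero_le_one).mp ?_
  exact (continuous_const.mul (continuous_id.min (continuous_const.sub continuous_id))).intervalIntegrable 0 1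

private lemma clausing_sym (p φ : ℝ → ℝ)
    (hp_nonneg : ∀ x ∈ Ioo (0:ℝ) 1, 0 ≤ p x)
    (hp_int : IntegrableOn p (Ioo 0 1))
    (hp_symm : ∀ x ∈ Ioo (0:ℝ) 1, p x = p (1 - x))
    (hp_mono : MonotoneOn p (Ioo 0 (1/2)))
    (hφ_conc : ConcaveOn ℝ (Ioo 0 1) φ)
    (hφ_pos : ∀ x ∈ Ioo (0:ℝ) 1, 0 < φ x)
    (hφ_int : IntegrableOn φ (Ioo 0 1))
    (hpφ_int : IntegrableOn (fun x => p x * φ x) (Ioo 0 1))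
    (hpq_int : IntegrableOn (fun x => 4 * min x (1 - x) * p x) (Ioo 0 1))
    (hφ_symm : ∀ x ∈ Ioo (0:ℝ) 1, φ x = φ (1 - x)) :
    ∫ x in Ioo (0:ℝ) 1, p x * φ x ≤
      (∫ x in Ioo (0:ℝ) 1, φ x) * ∫ x in Ioo (0:ℝ) 1, 4 * min x (1 - x) * p x := by
  have hsub : Ioo (0:ℝ) (1/2) ⊆ Ioo (0:ℝ) 1 := Ioo_subset_Ioo le_rfl (by norm_num)
  set C := ∫ x in Ioo (0:ℝ) 1, φ x with hC
  set h : ℝ → ℝ := fun x => C * (4 * min x (1 - x)) - φ x with hh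
  have hh_int : IntegrableOn h (Ioo (0:ℝ) 1) := (clausing_qint.const_mul C).sub hφ_int
  have hph_eq : (fun x => p x * h x) = fun x => C * (4 * min x (1 - x) * p x) - p x * φ x := by
    funext x; simp only [hh]; ring
  have hph_int : IntegrableOn (fun x => p x * h x) (Ioo (0:ℝ) 1) := by
    rw [hph_eq]; exact (hpq_int.const_mul C).sub hpφ_int
  -- the H condition
  have hH : ∀ t ∈ Ico (0:ℝ) (1/2), 0 ≤ ∫ x in Ioo t (1/2), h x := by
    intro t ht
    have ht0 : (0:ℝ) ≤ t := ht.1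
    have ht2 : t < 1/2 := ht.2
    have hsubt : Ioo t (1/2:ℝ) ⊆ Ioo (0:ℝ) 1 := Ioo_subset_Ioo ht0 (by norm_num)
    have hq : ∫ x in Ioo t (1/2:ℝ), C * (4 * min x (1 - x)) = C/2 - 2*C*t^2 := by
      have : ∀ x ∈ Ioo t (1/2:ℝ), C * (4 * min x (1 - x)) = x * (4*C) := by
        intro x hx
        rw [min_eq_left (by linarith [hx.2] : x ≤ 1 - x)]; ring
      rw [setIntegral_congr_fun measurableSet_Ioo this, clausing_linear_int ht2.le]
      ring
    have hsplitφ : ∫ x in Ioo t (1/2:ℝ), φ x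
        = (∫ x in Ioo (0:ℝ) (1/2), φ x) - ∫ x in Ioo (0:ℝ) t, φ x := by
      rw [clausing_split φ ht0 ht2.le (hφ_int.mono_set hsub)]; ring
    have hstar : 2*t^2 * C ≤ ∫ x in Ioo (0:ℝ) t, φ x := by
      rcases eq_or_lt_of_le ht0 with rfl | ht0'
      · simp
      · exact clausing_star φ hφ_pos hφ_int hφ_symm
          (fun a b ha hb hab => clausing_slope φ hφ_conc hφ_pos ha hb hab) ⟨ht0', ht2.le⟩
    have hint_t : IntegrableOn h (Ioo t (1/2:ℝ)) := hh_int.mono_set hsubt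
    have : ∫ x in Ioo t (1/2:ℝ), h x
        = (∫ x in Ioo t (1/2:ℝ), C * (4 * min x (1 - x))) - ∫ x in Ioo t (1/2:ℝ), φ x := by
      rw [hh]
      exact integral_sub ((clausing_qint.mono_set hsubt).const_mul C) (hφ_int.mono_set hsubt)
    rw [this, hq, hsplitφ, clausing_half φ hφ_int hφ_symm] at *
    have hCh : C = 2 * ∫ x in Ioo (0:ℝ) (1/2), φ x := clausing_half φ hφ_int hφ_symm
    linarith [hstar]
  -- core
  have hcore : 0 ≤ ∫ x in Ioo (0:ℝ) (1/2), p x * h x := by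
    refine clausing_core p h (fun x hx => hp_nonneg x (hsub hx)) hp_mono
      (hp_int.aemeasurable.mono_measure (Measure.restrict_mono hsub le_rfl))
      (hh_int.mono_set hsub) (hph_int.mono_set hsub) hH
  -- doubling by symmetry
  have hdouble : ∫ x in Ioo (0:ℝ) 1, p x * h x = 2 * ∫ x in Ioo (0:ℝ) (1/2), p x * h x := by
    have hs : ∫ x in Ioo (1/2:ℝ) 1, p x * h x = ∫ x in Ioo (0:ℝ) (1/2), p x * h x := by
      have h1 : ∫ x in Ioo (1/2:ℝ) 1, p x * h x
          = ∫ x in Ioo (1/2:ℝ) 1, p (1-x) * h (1-x) := by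
        refine setIntegral_congr_fun measurableSet_Ioo fun x hx => ?_
        have hxI : x ∈ Ioo (0:ℝ) 1 := ⟨by linarith [hx.1], hx.2⟩
        have e1 : p x = p (1 - x) := hp_symm x hxI
        have e2 : h x = h (1 - x) := by
          simp only [hh]
          rw [hφ_symm x hxI, show (1:ℝ) - (1 - x) = x by ring, min_comm]
        rw [← e1, ← e2]
      rw [h1, clausing_reflect (fun x => p x * h x) (by norm_num : (1/2:ℝ) ≤ 1)]
      norm_num
    rw [clausing_split (fun x => p x * h x) (by norm_num : (0:ℝ) ≤ 1/2)
      (by norm_num : (1/2:ℝ) ≤ 1) hph_int, hs]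
    ring
  have hfinal : 0 ≤ ∫ x in Ioo (0:ℝ) 1, p x * h x := by rw [hdouble]; linarith
  have hsplit : ∫ x in Ioo (0:ℝ) 1, p x * h x
      = C * (∫ x in Ioo (0:ℝ) 1, 4 * min x (1 - x) * p x) - ∫ x in Ioo (0:ℝ) 1, p x * φ x := by
    rw [hph_eq, integral_sub (hpq_int.const_mul C) hpφ_int, integral_const_mul]
  rw [hsplit] at hfinal
  linarith
/-- **Clausing's inequality.** If `p` is nonnegative, integrable, symmetric on `(0,1)`
and non-decreasing on `(0, 1/2)`, then for every concave, positive, integrable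
function `φ` on `(0,1)` (products assumed integrable),
`∫₀¹ p φ ≤ (∫₀¹ φ) · (∫₀¹ 4 min{x, 1-x} p(x) dx)`. -/
theorem clausing (p φ : ℝ → ℝ)
    (hp_nonneg : ∀ x ∈ Ioo (0:ℝ) 1, 0 ≤ p x)
    (hp_int : IntegrableOn p (Ioo 0 1))
    (hp_symm : ∀ x ∈ Ioo (0:ℝ) 1, p x = p (1 - x))
    (hp_mono : MonotoneOn p (Ioo 0 (1/2)))
    (hφ_conc : ConcaveOn ℝ (Ioo 0 1) φ)
    (hφ_pos : ∀ x ∈ Ioo (0:ℝ) 1, 0 < φ x)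
    (hφ_int : IntegrableOn φ (Ioo 0 1))
    (hpφ_int : IntegrableOn (fun x => p x * φ x) (Ioo 0 1))
    (hpq_int : IntegrableOn (fun x => 4 * min x (1 - x) * p x) (Ioo 0 1)) :
    ∫ x in Ioo (0:ℝ) 1, p x * φ x ≤
      (∫ x in Ioo (0:ℝ) 1, φ x) * ∫ x in Ioo (0:ℝ) 1, 4 * min x (1 - x) * p x := by
  set ψ : ℝ → ℝ := fun x => (φ x + φ (1 - x)) / 2 with hψdef
  have hmem : ∀ x ∈ Ioo (0:ℝ) 1, (1 - x) ∈ Ioo (0:ℝ) 1 := fun x hx =>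
    ⟨by linarith [hx.2], by linarith [hx.1]⟩
  -- integrability of reflections
  have hrefl_int : IntegrableOn (fun x => φ (1 - x)) (Ioo 0 1) := by
    have := clausing_reflect_int φ zero_le_one hφ_int
    simpa using this
  have hψ_int : IntegrableOn ψ (Ioo 0 1) := (hφ_int.add hrefl_int).div_const 2
  -- concavity of ψ
  have hrefl_conc : ConcaveOn ℝ (Ioo 0 1) (fun x => φ (1 - x)) := by
    refine ⟨convex_Ioo _ _, fun x hx y hy a b ha hb hab => ?_⟩
    have := hφ_conc.2 (hmem x hx) (hmem y hy) ha hb hab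
    simp only [smul_eq_mul] at this ⊢
    have harg : a * (1 - x) + b * (1 - y) = 1 - (a * x + b * y) := by linear_combination hab
    rw [harg] at this
    exact this
  have hψ_conc : ConcaveOn ℝ (Ioo 0 1) ψ := by
    have heq : ψ = (1/2 : ℝ) • (φ + fun x => φ (1 - x)) := by
      funext x; simp only [hψdef, Pi.smul_apply, Pi.add_apply, smul_eq_mul]; ring
    rw [heq]
    exact (hφ_conc.add hrefl_conc).smul (by norm_num)
  have hψ_pos : ∀ x ∈ Ioo (0:ℝ) 1, 0 < ψ x := fun x hx => by
    have := hφ_pos x hx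
    have := hφ_pos _ (hmem x hx)
    simp only [hψdef]; positivity
  have hψ_symm : ∀ x ∈ Ioo (0:ℝ) 1, ψ x = ψ (1 - x) := fun x hx => by
    simp only [hψdef, sub_sub_cancel]; ring
  -- p * reflection integrable
  have hpφr_int : IntegrableOn (fun x => p x * φ (1 - x)) (Ioo 0 1) := by
    have h1 : IntegrableOn (fun x => p (1 - x) * φ (1 - x)) (Ioo 0 1) := by
      have := clausing_reflect_int (fun x => p x * φ x) zero_le_one hpφ_int
      simpa using this
    refine h1.congr_fun (fun x hx => ?_) measurableSet_Ioo
    beta_reduce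
    rw [← hp_symm x hx]
  have hpψ_eq : (fun x => p x * ψ x)
      = fun x => (p x * φ x + p x * φ (1 - x)) / 2 := by
    funext x; simp only [hψdef]; ring
  have hpψ_int : IntegrableOn (fun x => p x * ψ x) (Ioo 0 1) := by
    rw [hpψ_eq]; exact (hpφ_int.add hpφr_int).div_const 2
  -- integral identities
  have hreflφ : ∫ x in Ioo (0:ℝ) 1, φ (1 - x) = ∫ x in Ioo (0:ℝ) 1, φ x := by
    have := clausing_reflect φ zero_le_one
    simpa using this
  have hψint_eq : ∫ x in Ioo (0:ℝ) 1, ψ x = ∫ x in Ioo (0:ℝ) 1, φ x := by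
    simp only [hψdef]
    rw [integral_div, integral_add hφ_int hrefl_int, hreflφ]
    ring
  have hpψint_eq : ∫ x in Ioo (0:ℝ) 1, p x * ψ x = ∫ x in Ioo (0:ℝ) 1, p x * φ x := by
    rw [hpψ_eq, integral_div, integral_add hpφ_int hpφr_int]
    have h2 : ∫ x in Ioo (0:ℝ) 1, p x * φ (1 - x) = ∫ x in Ioo (0:ℝ) 1, p x * φ x := by
      have h3 : ∫ x in Ioo (0:ℝ) 1, p x * φ (1 - x)
          = ∫ x in Ioo (0:ℝ) 1, p (1 - x) * φ (1 - x) := by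
        refine setIntegral_congr_fun measurableSet_Ioo fun x hx => ?_
        rw [← hp_symm x hx]
      rw [h3]
      have := clausing_reflect (fun x => p x * φ x) zero_le_one
      simpa using this
    rw [h2]; ring
  have := clausing_sym p ψ hp_nonneg hp_int hp_symm hp_mono hψ_conc hψ_pos hψ_int
    hpψ_int hpq_int hψ_symm
  rw [hψint_eq, hpψint_eq] at this
  exact this
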